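/- Let F be a finite set of affine functions on ℤ (each of the form f(z) = a·z + b with a, b ∈ ℤ), let k ∈ ℤ with k ≠ 0, and let x, y ∈ ℤ. Then the proposition 'there exists an F-composition G with G(x) ≡ y (mod k)' is decidable. -/
import Mathlib


/-- The affine function `z ↦ a·z + b` encoded by the coefficient pair `(a, b)`. -/
def affineFn (p : ℤ × ℤ) (z : ℤ) : ℤ := p.1 * z + p.2

/-- Apply the `F`-composition given by the tuple `L = (f₁, …, f_K)` (i.e. the map
`f_K ∘ ⋯ ∘ f₁`) to `x`. -/
def applyComp (L : List (ℤ × ℤ)) (x : ℤ) : ℤ := L.foldl (fun z p => affineFn p z) x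

namespace ModReach

open Encodable

/-- Natural-number representative of `a mod k` (equal to `(a % k).toNat` for `k ≠ 0`),
expressed using only `Int.natAbs` and natural arithmetic. -/
def natImod (a k : ℤ) : ℕ :=
  if 0 ≤ a then a.natAbs % k.natAbs
  else (k.natAbs - a.natAbs % k.natAbs) % k.natAbs

/-- One saturation step on the list of reachable residues. -/
def stepL (c : List (ℕ × ℕ) × ℕ) (S : List ℕ) : List ℕ :=
  S ++ S.flatMap (fun z => c.1.map fun p => (p.1 * z + p.2) % c.2)

/-- Configuration: residue images of the coefficient pairs, together with `|k|`. -/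
def cfg (F : List (ℤ × ℤ)) (k : ℤ) : List (ℕ × ℕ) × ℕ :=
  (F.map fun p => (natImod p.1 k, natImod p.2 k), k.natAbs)

/-- Reachable residues after `n` saturation steps. -/
def LL (F : List (ℤ × ℤ)) (x k : ℤ) (n : ℕ) : List ℕ :=
  (stepL (cfg F k))^[n] [natImod x k]

/-- The decision procedure. -/
def decAux (q : List (ℤ × ℤ) × ℤ × ℤ × ℤ) : Bool :=
  (!(q.2.2.2.natAbs == 0)) &&
    (LL q.1 q.2.1 q.2.2.2 q.2.2.2.natAbs).foldl
      (fun b z => b || (z == natImod q.2.2.1 q.2.2.2)) false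

/-! ### Encoding facts for `ℤ` -/

theorem enc_ofNat (m : ℕ) : encode (Int.ofNat m) = 2 * m := by
  show Equiv.intEquivNat (Int.ofNat m) = 2 * m
  simp only [Equiv.intEquivNat, Equiv.trans_apply, Equiv.intEquivNatSumNat]
  rfl

theorem enc_negSucc (m : ℕ) : encode (Int.negSucc m) = 2 * m + 1 := by
  show Equiv.intEquivNat (Int.negSucc m) = 2 * m + 1
  simp only [Equiv.intEquivNat, Equiv.trans_apply, Equiv.intEquivNatSumNat]
  rfl

theorem primrec_natAbs : Primrec Int.natAbs := by
  have h : Primrec fun z : ℤ => (encode z + 1) / 2 :=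
    Primrec.nat_div.comp (Primrec.succ.comp Primrec.encode) (Primrec.const 2)
  refine h.of_eq fun z => ?_
  cases z with
  | ofNat m => rw [enc_ofNat]; simp [Int.natAbs]; omega
  | negSucc m => rw [enc_negSucc]; simp [Int.natAbs]; omega

theorem primrec_nonneg : PrimrecPred fun z : ℤ => 0 ≤ z := by
  have h : PrimrecPred fun z : ℤ => encode z % 2 = 0 :=
    Primrec.eq.comp (Primrec.nat_mod.comp Primrec.encode (Primrec.const 2)) (Primrec.const 0)
  refine h.of_eq fun z => ?_
  cases z with
  | ofNat m => rw [enc_ofNat]; simp; try omega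
  | negSucc m => rw [enc_negSucc]; simp; try omega

theorem primrec_natImod : Primrec₂ natImod := by
  have h1 : PrimrecPred fun p : ℤ × ℤ => 0 ≤ p.1 := primrec_nonneg.comp Primrec.fst
  have hA : Primrec fun p : ℤ × ℤ => p.1.natAbs := primrec_natAbs.comp Primrec.fst
  have hK : Primrec fun p : ℤ × ℤ => p.2.natAbs := primrec_natAbs.comp Primrec.snd
  have hb1 : Primrec fun p : ℤ × ℤ => p.1.natAbs % p.2.natAbs := Primrec.nat_mod.comp hA hK
  have hb2 : Primrec fun p : ℤ × ℤ => (p.2.natAbs - p.1.natAbs % p.2.natAbs) % p.2.natAbs :=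
    Primrec.nat_mod.comp (Primrec.nat_sub.comp hK hb1) hK
  exact (Primrec.ite h1 hb1 hb2)

theorem primrec_stepL : Primrec₂ stepL := by
  have hq : Primrec fun x : (((List (ℕ × ℕ) × ℕ) × List ℕ) × ℕ) × (ℕ × ℕ) =>
      (x.2.1 * x.1.2 + x.2.2) % x.1.1.1.2 :=
    Primrec.nat_mod.comp
      (Primrec.nat_add.comp
        (Primrec.nat_mul.comp (Primrec.fst.comp Primrec.snd) (Primrec.snd.comp Primrec.fst))
        (Primrec.snd.comp Primrec.snd))
      (Primrec.snd.comp (Primrec.fst.comp (Primrec.fst.comp Primrec.fst)))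
  have hg : Primrec₂ fun (a : (List (ℕ × ℕ) × ℕ) × List ℕ) (z : ℕ) =>
      a.1.1.map fun p => (p.1 * z + p.2) % a.1.2 :=
    Primrec.list_map (Primrec.fst.comp (Primrec.fst.comp Primrec.fst)) hq.to₂
  exact (Primrec.list_append.comp Primrec.snd
    (Primrec.list_flatMap Primrec.snd hg)).to₂

theorem primrec_decAux : Primrec decAux := by
  have pk : Primrec fun q : List (ℤ × ℤ) × ℤ × ℤ × ℤ => q.2.2.2 :=
    Primrec.snd.comp (Primrec.snd.comp Primrec.snd)
  have px : Primrec fun q : List (ℤ × ℤ) × ℤ × ℤ × ℤ => q.2.1 :=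
    Primrec.fst.comp Primrec.snd
  have py : Primrec fun q : List (ℤ × ℤ) × ℤ × ℤ × ℤ => q.2.2.1 :=
    Primrec.fst.comp (Primrec.snd.comp Primrec.snd)
  have pK : Primrec fun q : List (ℤ × ℤ) × ℤ × ℤ × ℤ => q.2.2.2.natAbs :=
    primrec_natAbs.comp pk
  have pcfg : Primrec fun q : List (ℤ × ℤ) × ℤ × ℤ × ℤ => cfg q.1 q.2.2.2 := by
    have hmap : Primrec fun q : List (ℤ × ℤ) × ℤ × ℤ × ℤ =>
        q.1.map fun p => (natImod p.1 q.2.2.2, natImod p.2 q.2.2.2) :=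
      Primrec.list_map Primrec.fst
        ((Primrec.pair
          (primrec_natImod.comp (Primrec.fst.comp Primrec.snd) (pk.comp Primrec.fst))
          (primrec_natImod.comp (Primrec.snd.comp Primrec.snd) (pk.comp Primrec.fst))).to₂)
    exact Primrec.pair hmap pK
  have prun : Primrec fun q : List (ℤ × ℤ) × ℤ × ℤ × ℤ =>
      LL q.1 q.2.1 q.2.2.2 q.2.2.2.natAbs := by
    have hstart : Primrec fun q : List (ℤ × ℤ) × ℤ × ℤ × ℤ => [natImod q.2.1 q.2.2.2] :=
      Primrec.list_cons.comp (primrec_natImod.comp px pk) (Primrec.const [])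
    have hstep : Primrec₂ fun (q : List (ℤ × ℤ) × ℤ × ℤ × ℤ) (S : List ℕ) =>
        stepL (cfg q.1 q.2.2.2) S :=
      (primrec_stepL.comp (pcfg.comp Primrec.fst) Primrec.snd).to₂
    exact Primrec.nat_iterate pK hstart hstep
  have pfold : Primrec fun q : List (ℤ × ℤ) × ℤ × ℤ × ℤ =>
      (LL q.1 q.2.1 q.2.2.2 q.2.2.2.natAbs).foldl
        (fun b z => b || (z == natImod q.2.2.1 q.2.2.2)) false := by
    have hh : Primrec₂ fun (q : List (ℤ × ℤ) × ℤ × ℤ × ℤ) (p : Bool × ℕ) =>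
        p.1 || (p.2 == natImod q.2.2.1 q.2.2.2) :=
      ((Primrec.dom_bool₂ (· || ·)).comp (Primrec.fst.comp Primrec.snd)
        (Primrec.beq.comp (Primrec.snd.comp Primrec.snd)
          ((primrec_natImod.comp py pk).comp Primrec.fst))).to₂
    exact Primrec.list_foldl prun (Primrec.const false) hh
  have pb1 : Primrec fun q : List (ℤ × ℤ) × ℤ × ℤ × ℤ => !(q.2.2.2.natAbs == 0) :=
    (Primrec.dom_bool (!·)).comp (Primrec.beq.comp pK (Primrec.const 0))
  exact ((Primrec.dom_bool₂ (· && ·)).comp pb1 pfold).of_eq fun q => rfl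

/-! ### Arithmetic correctness of `natImod` -/

theorem emod_natAbs (a k : ℤ) : a % k = a % (k.natAbs : ℤ) := by
  rcases le_or_gt 0 k with h | h
  · rw [Int.natAbs_of_nonneg h]
  · rw [← Int.emod_neg]
    congr 1
    omega

theorem natImod_cast (a : ℤ) {k : ℤ} (hk : k ≠ 0) : (natImod a k : ℤ) = a % k := by
  have hK : k.natAbs ≠ 0 := Int.natAbs_ne_zero.mpr hk
  have hKpos : 0 < (k.natAbs : ℤ) := by exact_mod_cast Nat.pos_of_ne_zero hK
  rw [emod_natAbs a k]
  unfold natImod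
  split_ifs with h
  · rw [Int.natCast_mod, Int.natAbs_of_nonneg h]
  · have hn : a = -(a.natAbs : ℤ) := by omega
    have hle : a.natAbs % k.natAbs ≤ k.natAbs := (Nat.mod_lt _ (Nat.pos_of_ne_zero hK)).le
    rw [Int.natCast_mod, Nat.cast_sub hle, Int.natCast_mod]
    rw [Int.sub_emod, Int.emod_emod_of_dvd _ dvd_rfl, Int.emod_self]
    conv_rhs => rw [hn, ← zero_sub, Int.sub_emod]
    rw [Int.zero_emod]

theorem natImod_lt (a : ℤ) {k : ℤ} (hk : k ≠ 0) : natImod a k < k.natAbs := by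
  have hK : k.natAbs ≠ 0 := Int.natAbs_ne_zero.mpr hk
  unfold natImod
  split_ifs <;> exact Nat.mod_lt _ (Nat.pos_of_ne_zero hK)

theorem natImod_affine (p : ℤ × ℤ) (z : ℤ) {k : ℤ} (hk : k ≠ 0) :
    natImod (p.1 * z + p.2) k =
      (natImod p.1 k * natImod z k + natImod p.2 k) % k.natAbs := by
  have hK : k.natAbs ≠ 0 := Int.natAbs_ne_zero.mpr hk
  have : ((natImod (p.1 * z + p.2) k : ℕ) : ℤ) =
      (((natImod p.1 k * natImod z k + natImod p.2 k) % k.natAbs : ℕ) : ℤ) := by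
    rw [natImod_cast _ hk, Int.natCast_mod, Nat.cast_add, Nat.cast_mul,
      natImod_cast p.1 hk, natImod_cast z hk, natImod_cast p.2 hk]
    rw [emod_natAbs (p.1 * z + p.2) k, emod_natAbs p.1 k, emod_natAbs z k, emod_natAbs p.2 k]
    conv_lhs => rw [Int.add_emod, Int.mul_emod]
    conv_rhs =>
      rw [Int.add_emod, Int.mul_emod, Int.emod_emod_of_dvd _ dvd_rfl,
        Int.emod_emod_of_dvd _ dvd_rfl, Int.emod_emod_of_dvd _ dvd_rfl]
  exact_mod_cast this

/-! ### `applyComp` facts -/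

theorem applyComp_nil (x : ℤ) : applyComp [] x = x := rfl

theorem applyComp_append (G : List (ℤ × ℤ)) (p : ℤ × ℤ) (x : ℤ) :
    applyComp (G ++ [p]) x = p.1 * applyComp G x + p.2 := by
  simp [applyComp, affineFn]

/-! ### Reachability facts -/

theorem mem_stepL {c : List (ℕ × ℕ) × ℕ} {S : List ℕ} {r : ℕ} :
    r ∈ stepL c S ↔ r ∈ S ∨ ∃ z ∈ S, ∃ p ∈ c.1, (p.1 * z + p.2) % c.2 = r := by
  simp [stepL]

theorem LL_succ (F : List (ℤ × ℤ)) (x k : ℤ) (n : ℕ) :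
    LL F x k (n + 1) = stepL (cfg F k) (LL F x k n) := by
  unfold LL
  rw [Function.iterate_succ_apply']

theorem LL_mono (F : List (ℤ × ℤ)) (x k : ℤ) {m n : ℕ} (h : m ≤ n) {r : ℕ}
    (hr : r ∈ LL F x k m) : r ∈ LL F x k n := by
  induction n, h using Nat.le_induction with
  | base => exact hr
  | succ n hmn ih =>
    rw [LL_succ, mem_stepL]
    exact Or.inl ih

theorem LL_forward (F : List (ℤ × ℤ)) (x : ℤ) {k : ℤ} (hk : k ≠ 0) :
    ∀ n r, r ∈ LL F x k n →
      ∃ G : List (ℤ × ℤ), (∀ p ∈ G, p ∈ F) ∧ natImod (applyComp G x) k = r := by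
  intro n
  induction n with
  | zero =>
    intro r hr
    simp only [LL, Function.iterate_zero, id, List.mem_singleton] at hr
    exact ⟨[], by simp, by rw [applyComp_nil, hr]⟩
  | succ n ih =>
    intro r hr
    rw [LL_succ, mem_stepL] at hr
    rcases hr with hr | ⟨z, hz, p', hp', hval⟩
    · exact ih r hr
    · obtain ⟨p, hpF, rfl⟩ := List.mem_map.mp hp'
      obtain ⟨G, hG, hGz⟩ := ih z hz
      refine ⟨G ++ [p], ?_, ?_⟩
      · intro q hq
        rcases List.mem_append.mp hq with h | h
        · exact hG q h
        · simp only [List.mem_singleton] at h; exact h ▸ hpF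
      · rw [applyComp_append, natImod_affine p _ hk, hGz]
        exact hval

theorem LL_backward (F : List (ℤ × ℤ)) (x : ℤ) {k : ℤ} (hk : k ≠ 0)
    (G : List (ℤ × ℤ)) (hG : ∀ p ∈ G, p ∈ F) :
    ∃ n, natImod (applyComp G x) k ∈ LL F x k n := by
  induction G using List.reverseRecOn with
  | nil => exact ⟨0, by simp [LL, applyComp_nil]⟩
  | append_singleton G p ih =>
    have hG' : ∀ q ∈ G, q ∈ F := fun q hq => hG q (List.mem_append.mpr (Or.inl hq))
    have hpF : p ∈ F := hG p (List.mem_append.mpr (Or.inr (List.mem_singleton_self p)))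
    obtain ⟨n, hn⟩ := ih hG'
    refine ⟨n + 1, ?_⟩
    rw [LL_succ, mem_stepL]
    refine Or.inr ⟨natImod (applyComp G x) k, hn,
      (natImod p.1 k, natImod p.2 k), ?_, ?_⟩
    · exact List.mem_map.mpr ⟨p, hpF, rfl⟩
    · rw [applyComp_append]
      exact (natImod_affine p _ hk).symm

theorem LL_bound (F : List (ℤ × ℤ)) (x : ℤ) {k : ℤ} (hk : k ≠ 0) :
    ∀ n r, r ∈ LL F x k n → r < k.natAbs := by
  have hK : k.natAbs ≠ 0 := Int.natAbs_ne_zero.mpr hk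
  intro n
  induction n with
  | zero =>
    intro r hr
    simp only [LL, Function.iterate_zero, id, List.mem_singleton] at hr
    exact hr ▸ natImod_lt x hk
  | succ n ih =>
    intro r hr
    rw [LL_succ, mem_stepL] at hr
    rcases hr with hr | ⟨z, _, p', _, hval⟩
    · exact ih r hr
    · exact hval ▸ Nat.mod_lt _ (Nat.pos_of_ne_zero hK)

theorem stepL_congr {c : List (ℕ × ℕ) × ℕ} {S T : List ℕ}
    (h : ∀ a, a ∈ S ↔ a ∈ T) (a : ℕ) : a ∈ stepL c S ↔ a ∈ stepL c T := by
  rw [mem_stepL, mem_stepL]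
  exact or_congr (h a) (exists_congr fun z => and_congr (h z) Iff.rfl)

theorem LL_stab (F : List (ℤ × ℤ)) (x : ℤ) {k : ℤ} (hk : k ≠ 0) :
    ∀ m r, r ∈ LL F x k m → r ∈ LL F x k k.natAbs := by
  classical
  set K := k.natAbs with hKdef
  have hK : K ≠ 0 := Int.natAbs_ne_zero.mpr hk
  -- there is a stabilization point below K
  have key : ∃ n < K, ∀ a, a ∈ LL F x k (n + 1) ↔ a ∈ LL F x k n := by
    by_contra hco
    push_neg at hco
    have hproper : ∀ n < K, (LL F x k n).toFinset ⊂ (LL F x k (n + 1)).toFinset := by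
      intro n hn
      obtain ⟨a, ha⟩ := hco n hn
      have hsub : (LL F x k n).toFinset ⊆ (LL F x k (n + 1)).toFinset := by
        intro b hb
        rw [List.mem_toFinset] at *
        exact LL_mono F x k (Nat.le_succ n) hb
      refine Finset.ssubset_iff_of_subset hsub |>.mpr ?_
      rcases ha with ⟨h1, h2⟩ | ⟨h1, h2⟩
      · exact ⟨a, List.mem_toFinset.mpr h1, fun hc => h2 (List.mem_toFinset.mp hc)⟩
      · exact absurd (LL_mono F x k (Nat.le_succ n) h2) h1
    have hcard : ∀ n ≤ K, n < (LL F x k n).toFinset.card := by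
      intro n hn
      induction n with
      | zero =>
        have : natImod x k ∈ LL F x k 0 := by simp [LL]
        have := List.mem_toFinset.mpr this
        exact Finset.card_pos.mpr ⟨_, this⟩
      | succ n ih =>
        have h1 := ih (Nat.le_of_succ_le hn)
        have h2 := Finset.card_lt_card (hproper n (Nat.lt_of_succ_le hn))
        omega
    have hsub : (LL F x k K).toFinset ⊆ Finset.range K := by
      intro a ha
      rw [Finset.mem_range]
      exact LL_bound F x hk K a (List.mem_toFinset.mp ha)
    have := Finset.card_le_card hsub
    rw [Finset.card_range] at this
    have := hcard K le_rfl
    omega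
  obtain ⟨n, hnK, hstab⟩ := key
  have all_eq : ∀ j a, a ∈ LL F x k (n + j) ↔ a ∈ LL F x k n := by
    intro j
    induction j with
    | zero => intro a; rfl
    | succ j ih =>
      intro a
      have : n + (j + 1) = (n + j) + 1 := rfl
      rw [this, LL_succ]
      have h1 : a ∈ stepL (cfg F k) (LL F x k (n + j)) ↔ a ∈ stepL (cfg F k) (LL F x k n) :=
        stepL_congr ih a
      rw [h1, ← LL_succ]
      exact hstab a
  intro m r hr
  rcases le_or_gt m K with hm | hm
  · exact LL_mono F x k hm hr
  · have h1 : r ∈ LL F x k n := (all_eq (m - n) r).mp (by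
      have : n + (m - n) = m := by omega
      rw [this]; exact hr)
    have h2 : r ∈ LL F x k K := by
      have : n + (K - n) = K := by omega
      rw [← this]
      exact (all_eq (K - n) r).mpr h1
    exact h2

theorem foldl_or_eq (y : ℕ) (S : List ℕ) :
    ∀ b : Bool, S.foldl (fun b z => b || (z == y)) b = (b || decide (y ∈ S)) := by
  induction S with
  | nil => intro b; simp
  | cons z S ih =>
    intro b
    simp only [List.foldl_cons, ih, List.mem_cons]
    cases b <;> rcases eq_or_ne z y with h | h
    · subst h; simp
    · simp [h, h.symm]
    · subst h; simp
    · simp [h, h.symm]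

theorem decAux_iff (q : List (ℤ × ℤ) × ℤ × ℤ × ℤ) :
    decAux q = true ↔
      (q.2.2.2 ≠ 0 ∧
        ∃ G : List (ℤ × ℤ), (∀ p ∈ G, p ∈ q.1) ∧
          applyComp G q.2.1 ≡ q.2.2.1 [ZMOD q.2.2.2]) := by
  obtain ⟨F, x, y, k⟩ := q
  simp only [decAux, Bool.and_eq_true, Bool.not_eq_true', beq_eq_false_iff_ne, ne_eq,
    foldl_or_eq, Bool.false_or, decide_eq_true_eq]
  constructor
  · rintro ⟨hK, hmem⟩
    have hk : k ≠ 0 := fun h => hK (by simp [h])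
    refine ⟨hk, ?_⟩
    obtain ⟨G, hG, hval⟩ := LL_forward F x hk k.natAbs _ hmem
    refine ⟨G, hG, ?_⟩
    show applyComp G x % k = y % k
    have := congrArg (fun n : ℕ => (n : ℤ)) hval
    simpa only [natImod_cast _ hk] using this
  · rintro ⟨hk, G, hG, hmod⟩
    have hK : k.natAbs ≠ 0 := Int.natAbs_ne_zero.mpr hk
    refine ⟨hK, ?_⟩
    have hmod' : applyComp G x % k = y % k := hmod
    have hval : natImod (applyComp G x) k = natImod y k := by
      have h1 : ((natImod (applyComp G x) k : ℕ) : ℤ) = ((natImod y k : ℕ) : ℤ) := by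
        rw [natImod_cast _ hk, natImod_cast _ hk, hmod']
      exact_mod_cast h1
    obtain ⟨n, hn⟩ := LL_backward F x hk G hG
    rw [hval] at hn
    exact LL_stab F x hk n _ hn

end ModReach

/-- For a finite set `F` of affine functions on `ℤ` (given by their coefficient pairs),
`k ∈ ℤ` with `k ≠ 0`, and `x, y ∈ ℤ`, the proposition "there exists an `F`-composition `G`
with `G(x) ≡ y (mod k)`" is decidable (uniformly computable in `F`, `x`, `y`, `k`). -/
theorem mod_reachability_decidable :
    ComputablePred (fun q : List (ℤ × ℤ) × ℤ × ℤ × ℤ =>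
      q.2.2.2 ≠ 0 ∧
        ∃ G : List (ℤ × ℤ), (∀ p ∈ G, p ∈ q.1) ∧ applyComp G q.2.1 ≡ q.2.2.1 [ZMOD q.2.2.2]) := by
  have inst : DecidablePred (fun q : List (ℤ × ℤ) × ℤ × ℤ × ℤ =>
      q.2.2.2 ≠ 0 ∧
        ∃ G : List (ℤ × ℤ), (∀ p ∈ G, p ∈ q.1) ∧ applyComp G q.2.1 ≡ q.2.2.1 [ZMOD q.2.2.2]) :=
    fun q => decidable_of_iff (ModReach.decAux q = true) (ModReach.decAux_iff q)
  refine ⟨inst, ?_⟩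
  refine (ModReach.primrec_decAux.to_comp).of_eq fun q => ?_
  symm
  cases hb : ModReach.decAux q with
  | false =>
    rw [decide_eq_false_iff_not]
    intro hp
    have := (ModReach.decAux_iff q).mpr hp
    rw [hb] at this
    exact Bool.false_ne_true this
  | true =>
    rw [decide_eq_true_eq]
    exact (ModReach.decAux_iff q).mp hb
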